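/- If f ∈ S*_ρ, then for every z ∈ 𝔻 with z ≠ 0 one has f(z) ≠ 0 and 1 - arcsinh(1) < Re(z·f'(z)/f(z)) < 1 + arcsinh(1) (arcsinh(1) = Real.arsinh 1). In particular S*_ρ ⊂ S*_α (starlike of order α) for every 0 ≤ α ≤ 1 - arcsinh(1), and S*_ρ ⊂ M(β) = {f : Re(zf'/f) < β} for every β ≥ 1 + arcsinh(1). -/

import Mathlib

open Complex Filter Topology

/-- Principal branch of the complex inverse hyperbolic sine. -/
noncomputable def carcsinh (z : ℂ) : ℂ := Complex.log (z + (1 + z ^ 2) ^ ((1 : ℂ) / 2))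

/-- The function `ρ(z) = 1 + arcsinh z`. -/
noncomputable def ρ (z : ℂ) : ℂ := 1 + carcsinh z

/-- The open unit disk in `ℂ`. -/
def unitDisk : Set ℂ := {z : ℂ | ‖z‖ < 1}

/-- The class `S*_ρ`: analytic normalized functions with `z f'(z)/f(z)` subordinate to
`ρ(z) = 1 + arcsinh z` via a Schwarz function `ω`. -/
def SstarRho (f : ℂ → ℂ) : Prop :=
  AnalyticOnNhd ℂ f unitDisk ∧ f 0 = 0 ∧ deriv f 0 = 1 ∧
    ∃ ω : ℂ → ℂ, AnalyticOnNhd ℂ ω unitDisk ∧ ω 0 = 0 ∧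
      (∀ z ∈ unitDisk, ‖ω z‖ ≤ ‖z‖) ∧
      ∀ z ∈ unitDisk, z * deriv f z = f z * ρ (ω z)

lemma abs_key (w : ℂ) (hw : ‖w‖ < 1) :
    w + (1 + w ^ 2) ^ ((1 : ℂ) / 2) ≠ 0 ∧
    Real.sqrt 2 - 1 < ‖w + (1 + w ^ 2) ^ ((1 : ℂ) / 2)‖ ∧
    ‖w + (1 + w ^ 2) ^ ((1 : ℂ) / 2)‖ < 1 + Real.sqrt 2 := by
  have ha : (1 + w ^ 2 : ℂ) ≠ 0 := by
    intro h
    have h2 : w ^ 2 = -1 := by linear_combination h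
    have h3 := congrArg (‖·‖) h2
    simp only [norm_pow, norm_neg, norm_one] at h3
    nlinarith [norm_nonneg w]
  set s : ℂ := (1 + w ^ 2) ^ ((1 : ℂ) / 2) with hs_def
  have hs2 : s * s = 1 + w ^ 2 := by
    rw [hs_def, Complex.cpow_def_of_ne_zero ha, ← Complex.exp_add]
    rw [show Complex.log (1 + w^2) * ((1:ℂ)/2) + Complex.log (1 + w^2) * ((1:ℂ)/2)
        = Complex.log (1 + w^2) by ring]
    exact Complex.exp_log ha
  have habs_a : ‖1 + w ^ 2‖ ≤ 2 := by
    calc ‖1 + w ^ 2‖ ≤ ‖(1:ℂ)‖ + ‖w ^ 2‖ := norm_add_le _ _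
      _ ≤ 2 := by
          simp [map_pow]
          nlinarith [norm_nonneg w]
  have hsqrt2 : Real.sqrt 2 * Real.sqrt 2 = 2 := Real.mul_self_sqrt (by norm_num)
  have hsqrt2_one : (1:ℝ) ≤ Real.sqrt 2 := by nlinarith [Real.sqrt_nonneg 2]
  have habs_s : ‖s‖ ≤ Real.sqrt 2 := by
    nlinarith [norm_nonneg s, norm_mul s s, habs_a,
      (by rw [hs2] : ‖s*s‖ = ‖1+w^2‖)]
  have hprod : (w + s) * (s - w) = 1 := by linear_combination hs2
  have hne : w + s ≠ 0 := by
    intro h; rw [h, zero_mul] at hprod; exact one_ne_zero hprod.symm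
  have habs_prod : ‖w + s‖ * ‖s - w‖ = 1 := by
    rw [← norm_mul, hprod, norm_one]
  have h_upper : ‖w + s‖ < 1 + Real.sqrt 2 := by
    calc ‖w + s‖ ≤ ‖w‖ + ‖s‖ := norm_add_le _ _
      _ < 1 + Real.sqrt 2 := by linarith
  have h_sw : ‖s - w‖ < Real.sqrt 2 + 1 := by
    calc ‖s - w‖ ≤ ‖s‖ + ‖w‖ := by
          simpa [sub_eq_add_neg] using norm_add_le s (-w)
      _ < Real.sqrt 2 + 1 := by linarith
  have h_sw_pos : 0 < ‖s - w‖ := by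
    rcases eq_or_lt_of_le (norm_nonneg (s - w)) with h | h
    · rw [← h, mul_zero] at habs_prod; norm_num at habs_prod
    · exact h
  have h_lower : Real.sqrt 2 - 1 < ‖w + s‖ := by
    by_contra hx
    push_neg at hx
    have h1 : ‖w + s‖ * ‖s - w‖
        ≤ (Real.sqrt 2 - 1) * ‖s - w‖ :=
      mul_le_mul_of_nonneg_right hx h_sw_pos.le
    have h2 : (Real.sqrt 2 - 1) * ‖s - w‖
        < (Real.sqrt 2 - 1) * (Real.sqrt 2 + 1) := by
      have hpos : (0:ℝ) < Real.sqrt 2 - 1 := by nlinarith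
      exact mul_lt_mul_of_pos_left h_sw hpos
    have h3 : (Real.sqrt 2 - 1) * (Real.sqrt 2 + 1) = 1 := by nlinarith
    linarith [habs_prod]
  exact ⟨hne, h_lower, h_upper⟩

lemma arsinh_one_eq : Real.arsinh 1 = Real.log (1 + Real.sqrt 2) := by
  rw [Real.arsinh]
  norm_num

lemma log_sqrt2_sub_one : Real.log (Real.sqrt 2 - 1) = -Real.log (1 + Real.sqrt 2) := by
  have hsqrt2 : Real.sqrt 2 * Real.sqrt 2 = 2 := Real.mul_self_sqrt (by norm_num)
  have h1 : (1:ℝ) < Real.sqrt 2 := by nlinarith [Real.sqrt_nonneg 2]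
  have h : Real.sqrt 2 - 1 = (1 + Real.sqrt 2)⁻¹ := by
    field_simp
    nlinarith
  rw [h, Real.log_inv]

lemma re_carcsinh_bounds (w : ℂ) (hw : ‖w‖ < 1) :
    -Real.arsinh 1 < (carcsinh w).re ∧ (carcsinh w).re < Real.arsinh 1 := by
  obtain ⟨hne, hlo, hhi⟩ := abs_key w hw
  have hsqrt2 : Real.sqrt 2 * Real.sqrt 2 = 2 := Real.mul_self_sqrt (by norm_num)
  have h1 : (1:ℝ) < Real.sqrt 2 := by nlinarith [Real.sqrt_nonneg 2]
  have hre : (carcsinh w).re = Real.log (‖w + (1 + w ^ 2) ^ ((1 : ℂ) / 2)‖) := by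
    rw [carcsinh, Complex.log_re]
  constructor
  · rw [hre, arsinh_one_eq, ← log_sqrt2_sub_one]
    exact Real.log_lt_log (by linarith) hlo
  · rw [hre, arsinh_one_eq]
    exact Real.log_lt_log (norm_pos_iff.mpr hne) hhi

lemma rho_abs_bound (w : ℂ) (hw : ‖w‖ < 1) :
    ‖ρ w‖ ≤ 2 + Real.arsinh 1 + Real.pi := by
  obtain ⟨hne, hlo, hhi⟩ := abs_key w hw
  obtain ⟨hrelo, hrehi⟩ := re_carcsinh_bounds w hw
  have him : |(carcsinh w).im| ≤ Real.pi := by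
    rw [carcsinh, Complex.log_im]
    exact Complex.abs_arg_le_pi _
  have habs : ‖carcsinh w‖ ≤ |(carcsinh w).re| + |(carcsinh w).im| :=
    Complex.norm_le_abs_re_add_abs_im _
  have hre : |(carcsinh w).re| ≤ Real.arsinh 1 := abs_le.mpr ⟨hrelo.le, hrehi.le⟩
  calc ‖ρ w‖ ≤ ‖(1:ℂ)‖ + ‖carcsinh w‖ := norm_add_le _ _
    _ ≤ 2 + Real.arsinh 1 + Real.pi := by simp; linarith

lemma unitDisk_eq : unitDisk = Metric.ball (0:ℂ) 1 := by
  ext z; simp [unitDisk, Metric.mem_ball, Complex.dist_eq]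

lemma isOpen_unitDisk : IsOpen unitDisk := by rw [unitDisk_eq]; exact Metric.isOpen_ball

lemma isPreconnected_unitDisk : IsPreconnected unitDisk := by
  rw [unitDisk_eq]; exact (convex_ball _ _).isPreconnected

lemma zero_mem_unitDisk : (0:ℂ) ∈ unitDisk := by simp [unitDisk]

lemma nonvanishing (f ω : ℂ → ℂ) (hfa : AnalyticOnNhd ℂ f unitDisk)
    (hd1 : deriv f 0 = 1)
    (hωa : ∀ z ∈ unitDisk, ‖ω z‖ ≤ ‖z‖)
    (hsub : ∀ z ∈ unitDisk, z * deriv f z = f z * ρ (ω z))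
    (z₀ : ℂ) (hz₀ : z₀ ∈ unitDisk) (hz₀ne : z₀ ≠ 0) : f z₀ ≠ 0 := by
  intro hf0
  -- f is not eventually zero near z₀
  have hnz : ¬ (∀ᶠ z in 𝓝 z₀, f z = 0) := by
    intro h
    have hEq : Set.EqOn f 0 unitDisk :=
      hfa.eqOn_zero_of_preconnected_of_eventuallyEq_zero isPreconnected_unitDisk hz₀ h
    have hev : f =ᶠ[𝓝 0] (0 : ℂ → ℂ) :=
      Filter.eventuallyEq_of_mem (isOpen_unitDisk.mem_nhds zero_mem_unitDisk) hEq
    have h2 : deriv f 0 = deriv (0 : ℂ → ℂ) 0 := hev.deriv_eq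
    have h3 : deriv (0 : ℂ → ℂ) 0 = 0 := deriv_const _ _
    rw [h2, h3] at hd1
    exact one_ne_zero hd1.symm
  have hA : AnalyticAt ℂ f z₀ := hfa z₀ hz₀
  have horder : analyticOrderAt f z₀ ≠ ⊤ := by
    simp only [ne_eq, analyticOrderAt_eq_top]; exact hnz
  obtain ⟨n, hn⟩ := WithTop.ne_top_iff_exists.mp horder
  obtain ⟨g, hgA, hg0, heq⟩ := (hA.analyticOrderAt_eq_natCast (n := n)).mp hn.symm
  -- n ≥ 1
  have hfz₀ : f z₀ = (z₀ - z₀) ^ n • g z₀ := heq.self_of_nhds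
  obtain ⟨k, rfl⟩ : ∃ k, n = k + 1 := by
    rcases n with _ | k
    · exfalso; simp at hfz₀; exact hg0 (hf0 ▸ hfz₀.symm)
    · exact ⟨k, rfl⟩
  have heq' : ∀ᶠ z in 𝓝 z₀, f z = (z - z₀) ^ (k+1) * g z := by
    filter_upwards [heq] with z hz using by simpa [smul_eq_mul] using hz
  -- derivative formula near z₀
  have hderiv : ∀ᶠ z in 𝓝 z₀, deriv f z =
      ((k:ℂ)+1) * (z - z₀) ^ k * g z + (z - z₀) ^ (k+1) * deriv g z := by
    filter_upwards [heq'.eventually_nhds, hgA.eventually_analyticAt] with z hz hgz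
    have hdf : deriv f z = deriv (fun y => (y - z₀) ^ (k+1) * g y) z :=
      Filter.EventuallyEq.deriv_eq hz
    have h1 : HasDerivAt (fun y : ℂ => (y - z₀) ^ (k+1))
        (((k:ℂ)+1) * (z - z₀) ^ k) z := by
      have := ((hasDerivAt_id z).sub_const z₀).fun_pow (k+1)
      simpa using this
    have h2 : HasDerivAt g (deriv g z) z := hgz.differentiableAt.hasDerivAt
    have := (h1.fun_mul h2).deriv
    rw [hdf, this]
  have hgd : AnalyticAt ℂ (deriv g) z₀ := by
    have h1 : AnalyticOnNhd ℂ g {z | AnalyticAt ℂ g z} := fun z hz => hz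
    exact h1.deriv z₀ hgA
  have hUmem : unitDisk ∈ 𝓝 z₀ := isOpen_unitDisk.mem_nhds hz₀
  -- the cancelled identity on the punctured neighborhood
  have hkey : ∀ᶠ z in 𝓝[≠] z₀,
      z * (((k:ℂ)+1) * g z + (z - z₀) * deriv g z) = (z - z₀) * (g z * ρ (ω z)) := by
    filter_upwards [nhdsWithin_le_nhds heq', nhdsWithin_le_nhds hderiv,
      nhdsWithin_le_nhds hUmem, self_mem_nhdsWithin] with z hz hdz hU hzne'
    have hzne : z ≠ z₀ := hzne'
    have hsubz := hsub z hU
    rw [hz, hdz] at hsubz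
    have hpow : (z - z₀) ^ k ≠ 0 := pow_ne_zero k (sub_ne_zero.mpr hzne)
    apply mul_left_cancel₀ hpow
    ring_nf
    ring_nf at hsubz
    linear_combination hsubz
  -- LHS tendsto
  have hL : Tendsto (fun z => z * (((k:ℂ)+1) * g z + (z - z₀) * deriv g z)) (𝓝[≠] z₀)
      (𝓝 (z₀ * (((k:ℂ)+1) * g z₀))) := by
    have hc : ContinuousAt (fun z => z * (((k:ℂ)+1) * g z + (z - z₀) * deriv g z)) z₀ := by
      exact continuousAt_id.mul ((continuousAt_const.mul hgA.continuousAt).add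
        ((continuousAt_id.sub continuousAt_const).mul hgd.continuousAt))
    have := hc.continuousWithinAt (s := {z₀}ᶜ)
    simpa [ContinuousWithinAt] using this
  -- RHS tendsto 0
  have hR : Tendsto (fun z => (z - z₀) * (g z * ρ (ω z))) (𝓝[≠] z₀) (𝓝 0) := by
    rw [tendsto_zero_iff_norm_tendsto_zero]
    set M : ℝ := (‖g z₀‖ + 1) * (2 + Real.arsinh 1 + Real.pi) with hM
    have hgbd : ∀ᶠ z in 𝓝 z₀, ‖g z‖ ≤ ‖g z₀‖ + 1 := by
      have := hgA.continuousAt.tendsto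
      have h2 : ∀ᶠ w in 𝓝 (g z₀), ‖w‖ ≤ ‖g z₀‖ + 1 := by
        have : ContinuousAt (fun w : ℂ => ‖w‖) (g z₀) := continuous_norm.continuousAt
        have h3 := this.tendsto.eventually_le_const (by linarith : ‖g z₀‖ < ‖g z₀‖ + 1)
        exact h3
      exact this.eventually h2
    apply squeeze_zero' (g := fun z => ‖z - z₀‖ * M)
    · filter_upwards with z using norm_nonneg _
    · filter_upwards [nhdsWithin_le_nhds hgbd, nhdsWithin_le_nhds hUmem] with z hgz hU
      have hωz : ‖ω z‖ < 1 := lt_of_le_of_lt (hωa z hU) hU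
      have hρ := rho_abs_bound (ω z) hωz
      have h0 : (0:ℝ) ≤ 2 + Real.arsinh 1 + Real.pi := by
        have := Real.pi_pos
        have := Real.arsinh_nonneg_iff.mpr (by norm_num : (0:ℝ) ≤ 1)
        linarith
      simp only [norm_mul]
      rw [hM]
      have := mul_le_mul hgz hρ (norm_nonneg _) (by positivity)
      calc ‖z - z₀‖ * (‖g z‖ * ‖ρ (ω z)‖)
          ≤ ‖z - z₀‖ * ((‖g z₀‖ + 1) * (2 + Real.arsinh 1 + Real.pi)) := by
            apply mul_le_mul_of_nonneg_left this (norm_nonneg _)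
        _ = _ := rfl
    · have h1 : Tendsto (fun z => ‖z - z₀‖) (𝓝[≠] z₀) (𝓝 0) := by
        have : ContinuousAt (fun z => ‖z - z₀‖) z₀ :=
          continuous_norm.continuousAt.comp (continuousAt_id.sub continuousAt_const)
        have h2 := this.continuousWithinAt (s := {z₀}ᶜ)
        simpa [ContinuousWithinAt] using h2
      have := h1.mul_const M
      simpa using this
  -- contradiction
  have huniq : z₀ * (((k:ℂ)+1) * g z₀) = 0 :=
    tendsto_nhds_unique (hL.congr' hkey) hR
  have hk : ((k:ℂ)+1) ≠ 0 := Nat.cast_add_one_ne_zero k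
  rcases mul_eq_zero.mp huniq with h | h
  · exact hz₀ne h
  rcases mul_eq_zero.mp h with h | h
  · exact hk h
  · exact hg0 h

/-- If `f ∈ S*_ρ`, then `f z ≠ 0` and
`1 - arcsinh 1 < Re (z f'(z)/f(z)) < 1 + arcsinh 1` on the punctured disk; in
particular `S*_ρ ⊂ S*_α` for `0 ≤ α ≤ 1 - arcsinh 1`, and `S*_ρ ⊂ M(β)` for
`β ≥ 1 + arcsinh 1`. -/
theorem SstarRho_re_bounds (f : ℂ → ℂ) (hf : SstarRho f) :
    (∀ z ∈ unitDisk, z ≠ 0 → f z ≠ 0 ∧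
        1 - Real.arsinh 1 < (z * deriv f z / f z).re ∧
        (z * deriv f z / f z).re < 1 + Real.arsinh 1) ∧
    (∀ α : ℝ, 0 ≤ α → α ≤ 1 - Real.arsinh 1 →
        ∀ z ∈ unitDisk, z ≠ 0 → α < (z * deriv f z / f z).re) ∧
    (∀ β : ℝ, 1 + Real.arsinh 1 ≤ β →
        ∀ z ∈ unitDisk, z ≠ 0 → (z * deriv f z / f z).re < β) := by
  obtain ⟨hfa, hf0, hd1, ω, hωa, hω0, hωb, hsub⟩ := hf
  have hmain : ∀ z ∈ unitDisk, z ≠ 0 → f z ≠ 0 ∧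
      1 - Real.arsinh 1 < (z * deriv f z / f z).re ∧
      (z * deriv f z / f z).re < 1 + Real.arsinh 1 := by
    intro z hz hzne
    have hfz : f z ≠ 0 := nonvanishing f ω hfa hd1 hωb hsub z hz hzne
    have heq : z * deriv f z / f z = ρ (ω z) := by
      rw [hsub z hz]; field_simp
    have hzlt : ‖z‖ < 1 := hz
    have hωz : ‖ω z‖ < 1 := lt_of_le_of_lt (hωb z hz) hzlt
    obtain ⟨hlo, hhi⟩ := re_carcsinh_bounds (ω z) hωz
    refine ⟨hfz, ?_, ?_⟩ <;> rw [heq] <;>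
      simp only [ρ, Complex.add_re, Complex.one_re] <;> linarith
  refine ⟨hmain, ?_, ?_⟩
  · intro α hα0 hα z hz hzne
    exact lt_of_le_of_lt hα (hmain z hz hzne).2.1
  · intro β hβ z hz hzne
    exact lt_of_lt_of_le (hmain z hz hzne).2.2 hβ
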